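/- arXiv:2405.09917 — 5 statements merged into one kernel-verified Lean document; each statement's English description precedes it below -/
import Mathlib

section
/- Fix f ∈ C_λ and an interval J = [a,b] ⊆ I. Then for every ε > 0 there exists δ > 0 such that for every g ∈ C_λ with ρ(f,g) < δ one has λ(f⁻¹(J) △ g⁻¹(J)) < ε, where △ denotes symmetric difference. -/
open MeasureTheory Set
open scoped ENNReal

/-- Fix `f ∈ C_λ` and an interval `J = [a,b] ⊆ [0,1]`. For every `ε > 0` there is `δ > 0`
such that every `g ∈ C_λ` with `ρ(f,g) < δ` satisfies `λ(f⁻¹(J) △ g⁻¹(J)) < ε`. -/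
theorem stmt3 (f : C(unitInterval, unitInterval))
    (hf : MeasurePreserving f volume volume)
    (a b : ℝ) (ha : 0 ≤ a) (hab : a ≤ b) (hb : b ≤ 1)
    (ε : ℝ) (hε : 0 < ε) :
    ∃ δ > (0 : ℝ), ∀ g : C(unitInterval, unitInterval),
      MeasurePreserving g volume volume → dist f g < δ →
      volume (symmDiff
          (⇑f ⁻¹' {x : unitInterval | a ≤ (x : ℝ) ∧ (x : ℝ) ≤ b})
          (⇑g ⁻¹' {x : unitInterval | a ≤ (x : ℝ) ∧ (x : ℝ) ≤ b}))
        < ENNReal.ofReal ε := by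
  set δ := ε / 5 with hδdef
  have hδpos : 0 < δ := by positivity
  refine ⟨δ, hδpos, fun g hg hdist => ?_⟩
  set U : Set ℝ := Ioo (a - δ) (a + δ) ∪ Ioo (b - δ) (b + δ) with hU
  have hUmeas : MeasurableSet U := (measurableSet_Ioo).union measurableSet_Ioo
  set B : Set unitInterval := Subtype.val ⁻¹' U with hB
  have hBmeas : MeasurableSet B := measurable_subtype_coe hUmeas
  set J : Set unitInterval := {x : unitInterval | a ≤ (x : ℝ) ∧ (x : ℝ) ≤ b} with hJ
  -- pointwise distance bound
  have hpt : ∀ x : unitInterval, |((f x : ℝ)) - (g x : ℝ)| < δ := by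
    intro x
    have h1 : dist (f x) (g x) ≤ dist f g := ContinuousMap.dist_apply_le_dist x
    have h2 : dist (f x) (g x) = |((f x : ℝ)) - (g x : ℝ)| := Subtype.dist_eq _ _
    linarith [h1, h2 ▸ h1]
  -- the key inclusion
  have hsub : symmDiff (⇑f ⁻¹' J) (⇑g ⁻¹' J) ⊆ ⇑f ⁻¹' B := by
    intro x hx
    have hd := hpt x
    rcases hx with ⟨hfJ, hgJ⟩ | ⟨hgJ, hfJ⟩
    · obtain ⟨h1, h2⟩ := hfJ
      rcases not_and_or.mp hgJ with h | h
      · push_neg at h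
        left
        exact ⟨by linarith, by cases abs_lt.mp hd; linarith⟩
      · push_neg at h
        right
        exact ⟨by cases abs_lt.mp hd; linarith, by linarith⟩
    · obtain ⟨h1, h2⟩ := hgJ
      rcases not_and_or.mp hfJ with h | h
      · push_neg at h
        left
        exact ⟨by cases abs_lt.mp hd; linarith, by linarith⟩
      · push_neg at h
        right
        exact ⟨by linarith, by cases abs_lt.mp hd; linarith⟩
  calc volume (symmDiff (⇑f ⁻¹' J) (⇑g ⁻¹' J))
      ≤ volume (⇑f ⁻¹' B) := measure_mono hsub
    _ = volume B := hf.measure_preimage hBmeas.nullMeasurableSet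
    _ ≤ volume (U ∩ Icc (0:ℝ) 1) := by
        rw [hB, unitInterval.volume_def,
          Measure.comap_apply _ Subtype.coe_injective
            (fun s hs => (MeasurableEmbedding.subtype_coe measurableSet_Icc).measurableSet_image.mpr hs)
            _ hBmeas]
        apply measure_mono
        rintro y ⟨x, hxU, rfl⟩
        exact ⟨hxU, x.2⟩
    _ ≤ volume U := measure_mono inter_subset_left
    _ ≤ volume (Ioo (a - δ) (a + δ)) + volume (Ioo (b - δ) (b + δ)) := measure_union_le _ _
    _ = ENNReal.ofReal (2 * δ) + ENNReal.ofReal (2 * δ) := by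
        rw [Real.volume_Ioo, Real.volume_Ioo]
        ring_nf
    _ < ENNReal.ofReal ε := by
        rw [← ENNReal.ofReal_add (by positivity) (by positivity)]
        exact (ENNReal.ofReal_lt_ofReal_iff hε).mpr (by linarith)
end

section
/- Let P = {P₁,…,P_k} be a finite partition of I consisting of intervals and let n ∈ ℕ. Then the map f ↦ h_n(f,P), defined on C_λ, is continuous with respect to the uniform metric. -/
open MeasureTheory Set
open scoped ENNReal

noncomputable section

/-- `C_λ`: continuous maps of `[0,1]` preserving Lebesgue measure, with the uniform metric. -/
abbrev CLam : Type := {f : C(unitInterval, unitInterval) // MeasurePreserving f volume volume}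

/-- The atom `P_{s 0} ∩ f⁻¹(P_{s 1}) ∩ ⋯ ∩ f^{-(n-1)}(P_{s (n-1)})`
of the join `⋁_{i=0}^{n-1} f^{-i} P`. -/
def joinAtom (f : unitInterval → unitInterval) {k : ℕ} (P : Fin k → Set unitInterval)
    (n : ℕ) (s : Fin n → Fin k) : Set unitInterval :=
  ⋂ i : Fin n, f^[(i : ℕ)] ⁻¹' P (s i)

/-- `h_n(f, P) = (1/n) H(⋁_{i=0}^{n-1} f^{-i} P)`. -/
def hnEnt (f : unitInterval → unitInterval) {k : ℕ} (P : Fin k → Set unitInterval)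
    (n : ℕ) : ℝ :=
  (1 / (n : ℝ)) * ∑ s : Fin n → Fin k,
    -((volume (joinAtom f P n s)).toReal * Real.log (volume (joinAtom f P n s)).toReal)

/-- `h(f, P) = lim_n h_n(f, P)`; since `n ↦ h_n(f,P)` is non-increasing and nonnegative,
the limit equals the infimum. -/
def hEnt (f : unitInterval → unitInterval) {k : ℕ} (P : Fin k → Set unitInterval) : ℝ :=
  ⨅ n : ℕ, hnEnt f P (n + 1)

/-- A finite (mod measure zero) partition of `[0,1]` into measurable sets. -/
structure IsAEPartition {k : ℕ} (P : Fin k → Set unitInterval) : Prop where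
  meas : ∀ i, MeasurableSet (P i)
  cover : (⋃ i, P i) = Set.univ
  aedisj : ∀ i j, i ≠ j → volume (P i ∩ P j) = 0

/-- The measure-theoretic entropy of `f` with respect to Lebesgue measure:
`h_λ(f) = sup {h(f,P) : P a finite partition of I}`. -/
def hLam (f : unitInterval → unitInterval) : ℝ≥0∞ :=
  ⨆ (k : ℕ) (P : Fin k → Set unitInterval) (_ : IsAEPartition P), ENNReal.ofReal (hEnt f P)

/-! ### Auxiliary lemmas -/

open scoped symmDiff

lemma uI_singleton_null (x : unitInterval) : (volume : Measure unitInterval) {x} = 0 := by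
  rw [← volume_image_subtype_coe measurableSet_Icc, Set.image_singleton]
  exact measure_singleton _

lemma subsingleton_null {s : Set unitInterval} (hs : s.Subsingleton) :
    (volume : Measure unitInterval) s = 0 := by
  rcases hs.eq_empty_or_singleton with rfl | ⟨x, rfl⟩
  · simp
  · exact uI_singleton_null x

lemma closure_diff_null {J : Set unitInterval} (hJ : J.OrdConnected) :
    (volume : Measure unitInterval) (closure J \ J) = 0 := by
  have hsub : closure J \ J ⊆ (closure J ∩ lowerBounds J) ∪ (closure J ∩ upperBounds J) := by
    rintro x ⟨hxc, hxJ⟩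
    by_cases hl : x ∈ lowerBounds J
    · exact Or.inl ⟨hxc, hl⟩
    · refine Or.inr ⟨hxc, fun b hb => ?_⟩
      by_contra hxb
      rw [not_le] at hxb
      simp only [lowerBounds, Set.mem_setOf_eq, not_forall] at hl
      obtain ⟨a, haJ, hax⟩ := by
        push_neg at hl; exact hl
      exact hxJ (hJ.out haJ hb ⟨hax.le, hxb.le⟩)
  have h1 : (closure J ∩ lowerBounds J).Subsingleton := by
    rintro x ⟨hxc, hxl⟩ y ⟨hyc, hyl⟩
    have hJx : closure J ⊆ Set.Ici x := closure_minimal (fun a ha => hxl ha) isClosed_Ici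
    have hJy : closure J ⊆ Set.Ici y := closure_minimal (fun a ha => hyl ha) isClosed_Ici
    exact le_antisymm (hJx hyc) (hJy hxc)
  have h2 : (closure J ∩ upperBounds J).Subsingleton := by
    rintro x ⟨hxc, hxl⟩ y ⟨hyc, hyl⟩
    have hJx : closure J ⊆ Set.Iic x := closure_minimal (fun a ha => hxl ha) isClosed_Iic
    have hJy : closure J ⊆ Set.Iic y := closure_minimal (fun a ha => hyl ha) isClosed_Iic
    exact le_antisymm (hJy hxc) (hJx hyc)
  exact measure_mono_null hsub
    (measure_union_null (subsingleton_null h1) (subsingleton_null h2))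

lemma thickening_small {J : Set unitInterval} (hJm : MeasurableSet J) (hJ : J.OrdConnected)
    {η : ℝ≥0∞} (hη : 0 < η) :
    ∃ e > 0, (volume : Measure unitInterval) (Metric.cthickening e J \ J) < η := by
  have hten : Filter.Tendsto (fun r => (volume : Measure unitInterval) (Metric.cthickening r J))
      (nhds 0) (nhds (volume (closure J))) :=
    tendsto_measure_cthickening ⟨1, one_pos, measure_ne_top _ _⟩
  have hclo : (volume : Measure unitInterval) (closure J) = volume J := by
    refine le_antisymm ?_ (measure_mono subset_closure)
    have hsub : closure J ⊆ J ∪ (closure J \ J) := fun x hx => by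
      by_cases h : x ∈ J
      exacts [Or.inl h, Or.inr ⟨hx, h⟩]
    calc volume (closure J) ≤ volume (J ∪ (closure J \ J)) := measure_mono hsub
      _ ≤ volume J + volume (closure J \ J) := measure_union_le _ _
      _ = volume J := by rw [closure_diff_null hJ, add_zero]
  have hev : ∀ᶠ r in nhds (0 : ℝ),
      (volume : Measure unitInterval) (Metric.cthickening r J) < volume J + η := by
    refine Filter.Tendsto.eventually_lt_const ?_ hten
    rw [hclo]
    exact ENNReal.lt_add_right (measure_ne_top _ _) hη.ne'
  obtain ⟨δ, hδpos, hδp⟩ := Metric.eventually_nhds_iff.mp hev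
  refine ⟨δ / 2, by positivity, ?_⟩
  have h2 : (volume : Measure unitInterval) (Metric.cthickening (δ / 2) J) < volume J + η := by
    refine hδp ?_
    rw [Real.dist_eq, sub_zero, abs_of_pos (by positivity)]
    exact half_lt_self hδpos
  have key : volume (Metric.cthickening (δ / 2) J \ J) + volume J < η + volume J := by
    have hdi := measure_diff_add_inter (μ := (volume : Measure unitInterval)) (Metric.cthickening (δ / 2) J) hJm
    rw [inter_eq_self_of_subset_right (Metric.self_subset_cthickening J)] at hdi
    calc volume (Metric.cthickening (δ / 2) J \ J) + volume J
        = volume (Metric.cthickening (δ / 2) J) := hdi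
      _ < volume J + η := h2
      _ = η + volume J := add_comm _ _
  exact (ENNReal.add_lt_add_iff_right (measure_ne_top _ _)).mp key

/-- The `i`-th iterate, as a continuous self-map of the unit interval. -/
def iterCM (i : ℕ) (f : C(unitInterval, unitInterval)) : C(unitInterval, unitInterval) :=
  ContinuousMap.mk ((⇑f)^[i]) (f.continuous.iterate i)

@[simp] lemma iterCM_apply (i : ℕ) (f : C(unitInterval, unitInterval)) (x : unitInterval) :
    iterCM i f x = (⇑f)^[i] x := rfl

lemma continuous_iterCM (i : ℕ) : Continuous fun f : CLam => iterCM i f.1 := by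
  induction i with
  | zero =>
    have h : (fun f : CLam => iterCM 0 f.1) = fun _ => ContinuousMap.id unitInterval := by
      funext f; ext x; rfl
    rw [h]; exact continuous_const
  | succ i ih =>
    have h : (fun f : CLam => iterCM (i + 1) f.1)
        = fun f : CLam => (f.1).comp (iterCM i f.1) := by
      funext f; ext x
      simp only [iterCM_apply, ContinuousMap.comp_apply]
      rw [Function.iterate_succ_apply']
    rw [h]
    exact ContinuousMap.continuous_comp'.comp (ih.prodMk continuous_subtype_val)

lemma joinAtom_meas (f : CLam) {k : ℕ} (P : Fin k → Set unitInterval) (hP : IsAEPartition P)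
    (n : ℕ) (s : Fin n → Fin k) : MeasurableSet (joinAtom ⇑f.1 P n s) :=
  MeasurableSet.iInter fun i => (f.1.continuous.measurable.iterate _) (hP.meas _)

lemma symmDiff_iInter_subset {ι α : Type*} (A B : ι → Set α) :
    ((⋂ i, A i) ∆ (⋂ i, B i)) ⊆ ⋃ i, (A i) ∆ (B i) := by
  intro x hx
  rw [Set.mem_symmDiff] at hx
  rcases hx with ⟨hA, hB⟩ | ⟨hB, hA⟩
  · rw [Set.mem_iInter] at hA
    obtain ⟨i, hi⟩ : ∃ i, x ∉ B i := by simpa [Set.mem_iInter] using hB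
    exact Set.mem_iUnion.mpr ⟨i, Set.mem_symmDiff.mpr (Or.inl ⟨hA i, hi⟩)⟩
  · rw [Set.mem_iInter] at hB
    obtain ⟨i, hi⟩ : ∃ i, x ∉ A i := by simpa [Set.mem_iInter] using hA
    exact Set.mem_iUnion.mpr ⟨i, Set.mem_symmDiff.mpr (Or.inr ⟨hB i, hi⟩)⟩

lemma atom_cont {k : ℕ} (P : Fin k → Set unitInterval) (hP : IsAEPartition P)
    (hInt : ∀ i, (P i).OrdConnected) (n : ℕ) (s : Fin n → Fin k) :
    Continuous fun f : CLam => (volume (joinAtom ⇑f.1 P n s)).toReal := by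
  rcases Nat.eq_zero_or_pos n with rfl | hn
  · have h : (fun f : CLam => (volume (joinAtom ⇑f.1 P 0 s)).toReal)
        = fun _ => (volume (Set.univ : Set unitInterval)).toReal := by
      funext f; simp [joinAtom]
    rw [h]; exact continuous_const
  rw [Metric.continuous_iff]
  intro f₀ ε hε
  have hne : (Finset.univ : Finset (Fin n)).Nonempty :=
    Finset.univ_nonempty_iff.mpr (Fin.pos_iff_nonempty.mp hn)
  set η : ℝ := ε / (4 * n) with hηdef
  have hη : 0 < η := by positivity
  have hth : ∀ i : Fin n, ∃ e > 0,
      (volume : Measure unitInterval) (Metric.cthickening e (P (s i)) \ P (s i))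
        < ENNReal.ofReal η :=
    fun i => thickening_small (hP.meas _) (hInt _) (ENNReal.ofReal_pos.mpr hη)
  choose efun hepos heb using hth
  set ε₀ : ℝ := Finset.univ.inf' hne efun with hε₀def
  have hε₀pos : 0 < ε₀ := (Finset.lt_inf'_iff hne).mpr fun i _ => hepos i
  have hε₀le : ∀ i, ε₀ ≤ efun i := fun i => Finset.inf'_le _ (Finset.mem_univ i)
  have hδ : ∀ i : Fin n, ∃ d > 0, ∀ g : CLam, dist g f₀ < d →
      dist (iterCM (i : ℕ) g.1) (iterCM (i : ℕ) f₀.1) < ε₀ := by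
    intro i
    obtain ⟨d, hd, hdp⟩ := Metric.continuous_iff.mp (continuous_iterCM (i : ℕ)) f₀ ε₀ hε₀pos
    exact ⟨d, hd, fun g hg => hdp g hg⟩
  choose dfun hdpos hdp using hδ
  refine ⟨Finset.univ.inf' hne dfun, (Finset.lt_inf'_iff hne).mpr fun i _ => hdpos i, ?_⟩
  intro g hg
  have hgd : ∀ (i : Fin n) (x : unitInterval),
      dist ((⇑g.1)^[(i : ℕ)] x) ((⇑f₀.1)^[(i : ℕ)] x) ≤ ε₀ := by
    intro i x
    have h := hdp i g (lt_of_lt_of_le hg (Finset.inf'_le _ (Finset.mem_univ i)))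
    have h2 := (lt_of_le_of_lt (ContinuousMap.dist_apply_le_dist (f := iterCM (i : ℕ) g.1)
      (g := iterCM (i : ℕ) f₀.1) x) h).le
    simpa only [iterCM_apply] using h2
  set A := joinAtom ⇑g.1 P n s with hA
  set B := joinAtom ⇑f₀.1 P n s with hB
  have hterm : ∀ i : Fin n,
      volume ((((⇑g.1)^[(i : ℕ)] ⁻¹' P (s i))) ∆ (((⇑f₀.1)^[(i : ℕ)] ⁻¹' P (s i))))
        ≤ ENNReal.ofReal η + ENNReal.ofReal η := by
    intro i
    set J := P (s i) with hJ
    set D := Metric.cthickening (efun i) J \ J with hD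
    have hDm : MeasurableSet D :=
      (Metric.isClosed_cthickening.measurableSet).diff (hP.meas _)
    have h1 : ((⇑g.1)^[(i : ℕ)] ⁻¹' J) \ ((⇑f₀.1)^[(i : ℕ)] ⁻¹' J)
        ⊆ (⇑f₀.1)^[(i : ℕ)] ⁻¹' D := by
      rintro x ⟨hxg, hxf⟩
      refine ⟨Metric.mem_cthickening_of_dist_le _ _ _ _ hxg ?_, hxf⟩
      calc dist ((⇑f₀.1)^[(i : ℕ)] x) ((⇑g.1)^[(i : ℕ)] x)
          = dist ((⇑g.1)^[(i : ℕ)] x) ((⇑f₀.1)^[(i : ℕ)] x) := dist_comm _ _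
        _ ≤ ε₀ := hgd i x
        _ ≤ efun i := hε₀le i
    have h2 : ((⇑f₀.1)^[(i : ℕ)] ⁻¹' J) \ ((⇑g.1)^[(i : ℕ)] ⁻¹' J)
        ⊆ (⇑g.1)^[(i : ℕ)] ⁻¹' D := by
      rintro x ⟨hxf, hxg⟩
      exact ⟨Metric.mem_cthickening_of_dist_le _ _ _ _ hxf
        (le_trans (hgd i x) (hε₀le i)), hxg⟩
    calc volume ((((⇑g.1)^[(i : ℕ)] ⁻¹' J)) ∆ (((⇑f₀.1)^[(i : ℕ)] ⁻¹' J)))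
        ≤ volume (((⇑g.1)^[(i : ℕ)] ⁻¹' J) \ ((⇑f₀.1)^[(i : ℕ)] ⁻¹' J))
          + volume (((⇑f₀.1)^[(i : ℕ)] ⁻¹' J) \ ((⇑g.1)^[(i : ℕ)] ⁻¹' J)) := by
          rw [Set.symmDiff_def]; exact measure_union_le _ _
      _ ≤ volume ((⇑f₀.1)^[(i : ℕ)] ⁻¹' D) + volume ((⇑g.1)^[(i : ℕ)] ⁻¹' D) :=
          add_le_add (measure_mono h1) (measure_mono h2)
      _ = volume D + volume D := by
          rw [(f₀.2.iterate _).measure_preimage hDm.nullMeasurableSet,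
            (g.2.iterate _).measure_preimage hDm.nullMeasurableSet]
      _ ≤ ENNReal.ofReal η + ENNReal.ofReal η := add_le_add (heb i).le (heb i).le
  have htot : volume (A ∆ B) ≤ ENNReal.ofReal (ε / 2) := by
    have hsub : (A ∆ B) ⊆
        ⋃ i : Fin n, (((⇑g.1)^[(i : ℕ)] ⁻¹' P (s i))) ∆ (((⇑f₀.1)^[(i : ℕ)] ⁻¹' P (s i))) :=
      symmDiff_iInter_subset _ _
    calc volume (A ∆ B)
        ≤ ∑ i : Fin n,
            volume ((((⇑g.1)^[(i : ℕ)] ⁻¹' P (s i))) ∆ (((⇑f₀.1)^[(i : ℕ)] ⁻¹' P (s i)))) :=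
          le_trans (measure_mono hsub) (measure_iUnion_fintype_le _ _)
      _ ≤ ∑ _i : Fin n, (ENNReal.ofReal η + ENNReal.ofReal η) :=
          Finset.sum_le_sum fun i _ => hterm i
      _ = (n : ℝ≥0∞) * (ENNReal.ofReal η + ENNReal.ofReal η) := by
          rw [Finset.sum_const, Finset.card_univ, Fintype.card_fin, nsmul_eq_mul]
      _ = ENNReal.ofReal ((n : ℝ) * (η + η)) := by
          rw [← ENNReal.ofReal_add hη.le hη.le, ← ENNReal.ofReal_natCast n,
            ← ENNReal.ofReal_mul (by positivity)]
      _ = ENNReal.ofReal (ε / 2) := by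
          congr 1
          have hn' : (n : ℝ) ≠ 0 := Nat.cast_ne_zero.mpr hn.ne'
          rw [hηdef]
          field_simp
          ring
  have habs : dist (volume A).toReal (volume B).toReal ≤ (volume (A ∆ B)).toReal := by
    rw [Real.dist_eq]
    exact abs_measureReal_sub_le_measureReal_symmDiff
      (joinAtom_meas g P hP n s).nullMeasurableSet
      (joinAtom_meas f₀ P hP n s).nullMeasurableSet
  calc dist (volume A).toReal (volume B).toReal
      ≤ (volume (A ∆ B)).toReal := habs
    _ ≤ (ENNReal.ofReal (ε / 2)).toReal := ENNReal.toReal_mono ENNReal.ofReal_ne_top htot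
    _ = ε / 2 := ENNReal.toReal_ofReal (by positivity)
    _ < ε := by linarith

/-- Let `P = {P₁, …, P_k}` be a finite partition of `[0,1]` consisting of intervals and
`n ∈ ℕ`. The map `f ↦ h_n(f, P)` is continuous on `C_λ` (uniform metric). -/
theorem stmt5 {k : ℕ} (P : Fin k → Set unitInterval) (hP : IsAEPartition P)
    (hInt : ∀ i, (P i).OrdConnected) (n : ℕ) :
    Continuous fun f : CLam => hnEnt ⇑f.1 P n := by
  have h : (fun f : CLam => hnEnt ⇑f.1 P n)
      = fun f : CLam => (1 / (n : ℝ)) * ∑ s : Fin n → Fin k,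
          -((volume (joinAtom ⇑f.1 P n s)).toReal
            * Real.log (volume (joinAtom ⇑f.1 P n s)).toReal) := rfl
  rw [h]
  refine continuous_const.mul (continuous_finset_sum _ fun s _ => ?_)
  exact (Real.continuous_mul_log.comp (atom_cont P hP hInt n s)).neg

end
end

section
/- Let P be a finite partition of I into intervals, n ∈ ℕ, and β > 0. Then the set {f ∈ C_λ : h_n(f,P) < β} is open in C_λ with respect to the uniform metric. -/
open MeasureTheory Set
open scoped ENNReal

noncomputable section

/-! ### Auxiliary lemmas -/

/-- The frontier of an order-connected subset of the unit interval is Lebesgue-null. -/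
lemma aux_null_frontier {s : Set unitInterval} (hs : s.OrdConnected) :
    volume (frontier s) = 0 := by
  set A : Set ℝ := Subtype.val '' s with hA_def
  have hA : A.OrdConnected := by
    constructor
    rintro x ⟨x', hx', rfl⟩ y ⟨y', hy', rfl⟩ z hz
    have hz01 : z ∈ unitInterval := ⟨le_trans x'.2.1 hz.1, le_trans hz.2 y'.2.2⟩
    refine ⟨⟨z, hz01⟩, hs.out hx' hy' ⟨?_, ?_⟩, rfl⟩
    · exact Subtype.coe_le_coe.mp hz.1
    · exact Subtype.coe_le_coe.mp hz.2
  have hfrA : volume (frontier A) = 0 := by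
    rcases A.eq_empty_or_nonempty with h | hne
    · simp [h]
    · have hsub : A ⊆ Icc (0 : ℝ) 1 := by rintro _ ⟨x, _, rfl⟩; exact x.2
      have bddA : BddAbove A := ⟨1, fun x hx => (hsub hx).2⟩
      have bddB : BddBelow A := ⟨0, fun x hx => (hsub hx).1⟩
      set a := sInf A
      set b := sSup A
      have hab : a ≤ b := csInf_le_csSup hne bddB bddA
      have hsub2 : A ⊆ Icc a b := fun x hx => ⟨csInf_le bddB hx, le_csSup bddA hx⟩
      have hIoo : Ioo a b ⊆ A := by
        intro x hx
        obtain ⟨y, hy, hyx⟩ := exists_lt_of_csInf_lt hne hx.1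
        obtain ⟨z, hz, hxz⟩ := exists_lt_of_lt_csSup hne hx.2
        exact hA.out hy hz ⟨hyx.le, hxz.le⟩
      have h1 : closure A ⊆ Icc a b := closure_minimal hsub2 isClosed_Icc
      have h2 : Ioo a b ⊆ interior A := interior_maximal hIoo isOpen_Ioo
      have hfr : frontier A ⊆ ({a, b} : Set ℝ) := by
        rw [← Icc_diff_Ioo_same hab]
        exact fun x hx => ⟨h1 hx.1, fun h => hx.2 (h2 h)⟩
      refine measure_mono_null hfr ?_
      have : ({a, b} : Set ℝ).Countable := ((Set.finite_singleton b).insert a).countable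
      exact this.measure_zero _
  have hcl : closure s ⊆ Subtype.val ⁻¹' closure A := fun x hx => closure_subtype.mp hx
  have hint : Subtype.val ⁻¹' interior A ⊆ interior s := by
    refine interior_maximal ?_ (isOpen_interior.preimage continuous_subtype_val)
    intro x hx
    obtain ⟨y, hy, hxy⟩ := interior_subset (a := (x : ℝ)) hx
    rwa [Subtype.coe_injective hxy] at hy
  have hfsub : frontier s ⊆ Subtype.val ⁻¹' frontier A := by
    intro x hx
    exact ⟨hcl hx.1, fun h => hx.2 (hint h)⟩
  refine measure_mono_null hfsub ?_
  rw [unitInterval.volume_def,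
    (MeasurableEmbedding.subtype_coe measurableSet_Icc).comap_apply]
  exact measure_mono_null (image_preimage_subset _ _) hfrA

/-- The collar around an ord-connected set can be made of small measure. -/
lemma aux_collar_small {s : Set unitInterval} (hs : s.OrdConnected) {ε : ℝ} (hε : 0 < ε) :
    ∃ δ > 0, volume (Metric.cthickening δ s ∩ Metric.cthickening δ sᶜ) < ENNReal.ofReal ε := by
  set D : ℕ → Set unitInterval :=
    fun m => Metric.cthickening (1 / (m + 1)) s ∩ Metric.cthickening (1 / (m + 1)) sᶜ with hD
  have hmono : Antitone D := by
    intro m m' hmm'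
    have h1 : (1 : ℝ) / (m' + 1) ≤ 1 / (m + 1) := by
      apply one_div_le_one_div_of_le <;> [positivity; exact_mod_cast by omega]
    exact inter_subset_inter (Metric.cthickening_mono h1 _) (Metric.cthickening_mono h1 _)
  have hinter : (⋂ m, D m) ⊆ frontier s := by
    intro x hx
    rw [frontier_eq_closure_inter_closure]
    simp only [hD, mem_iInter, mem_inter_iff] at hx
    have key : ∀ (t : Set unitInterval), (∀ m : ℕ,
        x ∈ Metric.cthickening (1 / (m + 1)) t) → x ∈ closure t := by
      intro t ht
      rw [EMetric.mem_closure_iff_infEdist_zero]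
      have hle : ∀ m : ℕ, EMetric.infEdist x t ≤ ENNReal.ofReal (1 / (m + 1)) := fun m =>
        Metric.mem_cthickening_iff.mp (ht m)
      have htends : Filter.Tendsto (fun m : ℕ => ENNReal.ofReal (1 / (m + 1)))
          Filter.atTop (nhds 0) := by
        have := ENNReal.tendsto_ofReal (α := ℕ) tendsto_one_div_add_atTop_nhds_zero_nat
        simpa using this
      exact le_zero_iff.mp (ge_of_tendsto' htends hle)
    exact ⟨key s fun m => (hx m).1, key sᶜ fun m => (hx m).2⟩
  have hmeas : ∀ m, NullMeasurableSet (D m) volume := fun m =>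
    ((Metric.isClosed_cthickening.measurableSet.inter
      Metric.isClosed_cthickening.measurableSet)).nullMeasurableSet
  have htend := tendsto_measure_iInter_atTop hmeas hmono ⟨0, measure_ne_top _ _⟩
  have h0 : volume (⋂ m, D m) = 0 :=
    measure_mono_null hinter (aux_null_frontier hs)
  rw [h0] at htend
  have hpos : (0 : ℝ≥0∞) < ENNReal.ofReal ε := by simpa using hε
  obtain ⟨m, hm⟩ := (htend.eventually_lt_const hpos).exists
  exact ⟨1 / (m + 1), by positivity, hm⟩

/-- Iterates depend continuously on the map, in the uniform metric. -/
lemma aux_iterate_close (f : C(unitInterval, unitInterval)) (i : ℕ) {ε : ℝ} (hε : 0 < ε) :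
    ∃ δ > 0, ∀ g : C(unitInterval, unitInterval), dist g f < δ →
      ∀ x, dist ((⇑g)^[i] x) ((⇑f)^[i] x) < ε := by
  induction i generalizing ε with
  | zero => exact ⟨1, one_pos, fun g _ x => by simpa using hε⟩
  | succ i ih =>
    obtain ⟨δ₂, hδ₂, hf⟩ := Metric.uniformContinuous_iff.mp
      (CompactSpace.uniformContinuous_of_continuous f.continuous) (ε / 2) (half_pos hε)
    obtain ⟨δ₁, hδ₁, hg⟩ := ih hδ₂
    refine ⟨min δ₁ (ε / 2), lt_min hδ₁ (half_pos hε), fun g hgf x => ?_⟩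
    have h1 : dist (g ((⇑g)^[i] x)) (f ((⇑g)^[i] x)) ≤ dist g f :=
      ContinuousMap.dist_apply_le_dist _
    have h2 : dist (f ((⇑g)^[i] x)) (f ((⇑f)^[i] x)) < ε / 2 :=
      hf (hg g (lt_of_lt_of_le hgf (min_le_left _ _)) x)
    calc dist ((⇑g)^[i + 1] x) ((⇑f)^[i + 1] x)
        = dist (g ((⇑g)^[i] x)) (f ((⇑f)^[i] x)) := by
          rw [Function.iterate_succ_apply', Function.iterate_succ_apply']
      _ ≤ dist (g ((⇑g)^[i] x)) (f ((⇑g)^[i] x))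
          + dist (f ((⇑g)^[i] x)) (f ((⇑f)^[i] x)) := dist_triangle _ _ _
      _ < ε / 2 + ε / 2 :=
          add_lt_add_of_lt_of_lt (h1.trans_lt (hgf.trans_le (min_le_right _ _))) h2
      _ = ε := add_halves ε

/-- Simultaneous version of `aux_iterate_close` for all iterates below a bound. -/
lemma aux_iterate_close_all (f : C(unitInterval, unitInterval)) (N : ℕ) {ε : ℝ} (hε : 0 < ε) :
    ∃ δ > 0, ∀ g : C(unitInterval, unitInterval), dist g f < δ →
      ∀ i < N, ∀ x, dist ((⇑g)^[i] x) ((⇑f)^[i] x) < ε := by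
  induction N with
  | zero => exact ⟨1, one_pos, fun g _ i hi => by omega⟩
  | succ N ih =>
    obtain ⟨δ₁, hδ₁, h₁⟩ := ih
    obtain ⟨δ₂, hδ₂, h₂⟩ := aux_iterate_close f N hε
    refine ⟨min δ₁ δ₂, lt_min hδ₁ hδ₂, fun g hgf i hi x => ?_⟩
    rcases Nat.lt_succ_iff_lt_or_eq.mp hi with h | rfl
    · exact h₁ g (hgf.trans_le (min_le_left _ _)) i h x
    · exact h₂ g (hgf.trans_le (min_le_right _ _)) x

/-- Measure difference bound via a set covering the symmetric difference. -/
lemma aux_abs_toReal_sub_le {A B C : Set unitInterval} (h1 : A ⊆ B ∪ C) (h2 : B ⊆ A ∪ C) :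
    |(volume A).toReal - (volume B).toReal| ≤ (volume C).toReal := by
  have hA : volume A ≤ volume B + volume C := (measure_mono h1).trans (measure_union_le _ _)
  have hB : volume B ≤ volume A + volume C := (measure_mono h2).trans (measure_union_le _ _)
  have h3 : (volume A).toReal ≤ (volume B).toReal + (volume C).toReal := by
    rw [← ENNReal.toReal_add (measure_ne_top _ _) (measure_ne_top _ _)]
    exact ENNReal.toReal_mono (ENNReal.add_ne_top.mpr ⟨measure_ne_top _ _, measure_ne_top _ _⟩) hA
  have h4 : (volume B).toReal ≤ (volume A).toReal + (volume C).toReal := by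
    rw [← ENNReal.toReal_add (measure_ne_top _ _) (measure_ne_top _ _)]
    exact ENNReal.toReal_mono (ENNReal.add_ne_top.mpr ⟨measure_ne_top _ _, measure_ne_top _ _⟩) hB
  rw [abs_sub_le_iff]
  constructor <;> linarith

/-- The measure of each atom of the join depends continuously on `f ∈ C_λ`. -/
lemma aux_atom_continuous {k : ℕ} (P : Fin k → Set unitInterval)
    (hInt : ∀ i, (P i).OrdConnected) (n : ℕ) (s : Fin n → Fin k) (f₀ : CLam) :
    ContinuousAt (fun g : CLam => (volume (joinAtom ⇑g.1 P n s)).toReal) f₀ := by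
  rw [Metric.continuousAt_iff]
  intro ε hε
  have hε' : 0 < ε / (n + 1) := by positivity
  -- choose a collar width δ* working for all elements of the partition
  have hδstar : ∃ δ > (0 : ℝ), ∀ j : Fin k,
      volume (Metric.cthickening δ (P j) ∩ Metric.cthickening δ (P j)ᶜ)
        < ENNReal.ofReal (ε / (n + 1)) := by
    have h := fun j : Fin k => aux_collar_small (hInt j) hε'
    choose δf hδf hvol using h
    rcases isEmpty_or_nonempty (Fin k) with hk | hk
    · exact ⟨1, one_pos, fun j => (hk.false j).elim⟩
    · refine ⟨Finset.univ.inf' Finset.univ_nonempty δf, ?_, fun j => ?_⟩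
      · exact (Finset.lt_inf'_iff _).mpr fun j _ => hδf j
      · refine lt_of_le_of_lt (measure_mono ?_) (hvol j)
        have hle : Finset.univ.inf' Finset.univ_nonempty δf ≤ δf j :=
          Finset.inf'_le _ (Finset.mem_univ j)
        exact inter_subset_inter (Metric.cthickening_mono hle _) (Metric.cthickening_mono hle _)
  obtain ⟨δs, hδs, hcollar⟩ := hδstar
  obtain ⟨δ, hδ, hiter⟩ := aux_iterate_close_all f₀.1 n hδs
  refine ⟨δ, hδ, fun {g} hg => ?_⟩
  rw [Subtype.dist_eq] at hg
  have hclose : ∀ i : Fin n, ∀ x, dist ((⇑g.1)^[(i : ℕ)] x) ((⇑f₀.1)^[(i : ℕ)] x) ≤ δs :=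
    fun i x => (hiter g.1 hg i i.2 x).le
  set C : Set unitInterval := ⋃ i : Fin n,
    (⇑f₀.1)^[(i : ℕ)] ⁻¹' (Metric.cthickening δs (P (s i)) ∩ Metric.cthickening δs (P (s i))ᶜ)
    with hC
  have hAB : joinAtom ⇑g.1 P n s ⊆ joinAtom ⇑f₀.1 P n s ∪ C := by
    intro x hx
    by_cases hxB : x ∈ joinAtom ⇑f₀.1 P n s
    · exact Or.inl hxB
    · right
      simp only [joinAtom, mem_iInter, mem_preimage] at hx hxB
      push_neg at hxB
      obtain ⟨i, hi⟩ := hxB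
      refine mem_iUnion.mpr ⟨i, ?_⟩
      refine mem_preimage.mpr ⟨?_, ?_⟩
      · exact Metric.mem_cthickening_of_dist_le _ _ _ _ (hx i)
          ((dist_comm ((⇑g.1)^[(i : ℕ)] x) _) ▸ hclose i x)
      · exact Metric.self_subset_cthickening _ hi
  have hBA : joinAtom ⇑f₀.1 P n s ⊆ joinAtom ⇑g.1 P n s ∪ C := by
    intro x hx
    by_cases hxB : x ∈ joinAtom ⇑g.1 P n s
    · exact Or.inl hxB
    · right
      simp only [joinAtom, mem_iInter, mem_preimage] at hx hxB
      push_neg at hxB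
      obtain ⟨i, hi⟩ := hxB
      refine mem_iUnion.mpr ⟨i, ?_⟩
      refine mem_preimage.mpr ⟨?_, ?_⟩
      · exact Metric.self_subset_cthickening _ (hx i)
      · refine Metric.mem_cthickening_of_dist_le _ _ _ _ hi ?_
        rw [dist_comm]; exact hclose i x
  have hCbound : (volume C).toReal < ε := by
    have h1 : volume C ≤ ∑ i : Fin n, volume
        ((⇑f₀.1)^[(i : ℕ)] ⁻¹' (Metric.cthickening δs (P (s i))
          ∩ Metric.cthickening δs (P (s i))ᶜ)) := by
      refine (measure_iUnion_le _).trans_eq ?_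
      exact tsum_fintype _
    have h2 : ∀ i : Fin n, volume
        ((⇑f₀.1)^[(i : ℕ)] ⁻¹' (Metric.cthickening δs (P (s i))
          ∩ Metric.cthickening δs (P (s i))ᶜ))
        ≤ ENNReal.ofReal (ε / (n + 1)) := by
      intro i
      rw [(f₀.2.iterate (i : ℕ)).measure_preimage
        ((Metric.isClosed_cthickening.measurableSet.inter
          Metric.isClosed_cthickening.measurableSet)).nullMeasurableSet]
      exact (hcollar (s i)).le
    have h3 : volume C ≤ (n : ℝ≥0∞) * ENNReal.ofReal (ε / (n + 1)) := by
      refine h1.trans ?_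
      calc ∑ i : Fin n, volume ((⇑f₀.1)^[(i : ℕ)] ⁻¹' (Metric.cthickening δs (P (s i))
              ∩ Metric.cthickening δs (P (s i))ᶜ))
          ≤ ∑ _i : Fin n, ENNReal.ofReal (ε / (n + 1)) := Finset.sum_le_sum fun i _ => h2 i
        _ = (n : ℝ≥0∞) * ENNReal.ofReal (ε / (n + 1)) := by
            simp [Finset.sum_const, nsmul_eq_mul]
    have h4 : (n : ℝ≥0∞) * ENNReal.ofReal (ε / (n + 1))
        = ENNReal.ofReal ((n : ℝ) * (ε / (n + 1))) := by
      rw [ENNReal.ofReal_mul (by positivity)]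
      simp
    have h5 : (volume C).toReal ≤ (n : ℝ) * (ε / (n + 1)) := by
      rw [h4] at h3
      refine (ENNReal.toReal_mono ENNReal.ofReal_ne_top h3).trans_eq ?_
      exact ENNReal.toReal_ofReal (by positivity)
    have h6 : (n : ℝ) * (ε / (n + 1)) < ε := by
      rw [← mul_div_assoc, div_lt_iff₀ (by positivity : (0:ℝ) < (n:ℝ) + 1)]
      nlinarith
    linarith
  calc dist ((volume (joinAtom (⇑g.1) P n s)).toReal) ((volume (joinAtom (⇑f₀.1) P n s)).toReal)
      = |(volume (joinAtom (⇑g.1) P n s)).toReal - (volume (joinAtom (⇑f₀.1) P n s)).toReal| :=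
        Real.dist_eq _ _
    _ ≤ (volume C).toReal := aux_abs_toReal_sub_le hAB hBA
    _ < ε := hCbound

/-- `h_n(·, P)` is continuous on `C_λ`. -/
lemma aux_hnEnt_continuous {k : ℕ} (P : Fin k → Set unitInterval)
    (hInt : ∀ i, (P i).OrdConnected) (n : ℕ) :
    Continuous fun f : CLam => hnEnt ⇑f.1 P n := by
  rw [continuous_iff_continuousAt]
  intro f₀
  unfold hnEnt
  refine ContinuousAt.mul continuousAt_const ?_
  refine tendsto_finset_sum _ fun s _ => ?_
  exact ((Real.continuous_mul_log.continuousAt).comp (aux_atom_continuous P hInt n s f₀)).neg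
/-- Let `P` be a finite partition of `[0,1]` into intervals, `n ∈ ℕ` and `β > 0`.
Then `{f ∈ C_λ : h_n(f, P) < β}` is open in `C_λ` (uniform metric). -/
theorem stmt6 {k : ℕ} (P : Fin k → Set unitInterval) (hP : IsAEPartition P)
    (hInt : ∀ i, (P i).OrdConnected) (n : ℕ) (β : ℝ) (hβ : 0 < β) :
    IsOpen {f : CLam | hnEnt ⇑f.1 P n < β} := by
  have : {f : CLam | hnEnt ⇑f.1 P n < β} = (fun f : CLam => hnEnt ⇑f.1 P n) ⁻¹' Iio β := rfl
  rw [this]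
  exact isOpen_Iio.preimage (aux_hnEnt_continuous P hInt n)

end
end

section
/- A continuous map f : I → ℝ is of nonmonotonic type if and only if for every x ∈ I the upper derivative D̄f(x) = +∞ and the lower derivative D̲f(x) = −∞. -/
open Filter Topology

/-- `g` is non-decreasing at `x`: for some `δ > 0`, `g(t) ≤ g(x)` for
`t ∈ I ∩ (x−δ, x)` and `g(t) ≥ g(x)` for `t ∈ I ∩ (x, x+δ)`. -/
def NonDecreasingAt (g : unitInterval → ℝ) (x : unitInterval) : Prop :=
  ∃ δ : ℝ, 0 < δ ∧
    (∀ t : unitInterval, (x : ℝ) - δ < (t : ℝ) → (t : ℝ) < (x : ℝ) → g t ≤ g x) ∧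
    (∀ t : unitInterval, (x : ℝ) < (t : ℝ) → (t : ℝ) < (x : ℝ) + δ → g x ≤ g t)

/-- `g` is monotone at `x`: `g` or `−g` is non-decreasing at `x`. -/
def MonotoneAtPt (g : unitInterval → ℝ) (x : unitInterval) : Prop :=
  NonDecreasingAt g x ∨ NonDecreasingAt (fun t => -(g t)) x

/-- `g` is of monotonic type at `x`: for some `γ ∈ ℝ` the function
`g_{−γ} : t ↦ g(t) − γ t` is monotone at `x`. -/
def MonotonicTypeAt (g : unitInterval → ℝ) (x : unitInterval) : Prop :=
  ∃ γ : ℝ, MonotoneAtPt (fun t => g t - γ * (t : ℝ)) x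

/-- `g` is of nonmonotonic type: it is not of monotonic type at any point of `[0,1]`. -/
def NonmonotonicType (g : unitInterval → ℝ) : Prop :=
  ∀ x : unitInterval, ¬ MonotonicTypeAt g x

lemma unit_dist (t x : unitInterval) : dist t x = |(t : ℝ) - (x : ℝ)| := by
  rw [Subtype.dist_eq, Real.dist_eq]

lemma evClaimA (g : unitInterval → ℝ) (x : unitInterval) (γ : ℝ)
    (h : NonDecreasingAt (fun t => g t - γ * (t : ℝ)) x) :
    ∀ᶠ t in nhdsWithin x ({x}ᶜ : Set unitInterval),
      γ ≤ (g t - g x) / ((t : ℝ) - (x : ℝ)) := by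
  obtain ⟨δ, hδ, hl, hr⟩ := h
  rw [Filter.eventually_iff, Metric.mem_nhdsWithin_iff]
  refine ⟨δ, hδ, ?_⟩
  rintro t ⟨htb, htc⟩
  have hne : (t : ℝ) ≠ (x : ℝ) :=
    Subtype.coe_ne_coe.mpr (Set.mem_compl_singleton_iff.mp htc)
  have hd : |(t : ℝ) - (x : ℝ)| < δ := by
    simpa [unit_dist] using htb
  have hd' := abs_lt.mp hd
  simp only [Set.mem_setOf_eq]
  rcases lt_or_gt_of_ne hne with hlt | hgt
  · rw [le_div_iff_of_neg (by linarith)]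
    have h1 := hl t (by linarith [hd'.1]) hlt
    have h2 : γ * ((t : ℝ) - (x : ℝ)) = γ * (t : ℝ) - γ * (x : ℝ) := by ring
    simp only at h1
    linarith
  · rw [le_div_iff₀ (by linarith)]
    have h1 := hr t hgt (by linarith [hd'.2])
    have h2 : γ * ((t : ℝ) - (x : ℝ)) = γ * (t : ℝ) - γ * (x : ℝ) := by ring
    simp only at h1
    linarith

lemma evClaimA' (g : unitInterval → ℝ) (x : unitInterval) (γ : ℝ)
    (h : NonDecreasingAt (fun t => -(g t - γ * (t : ℝ))) x) :
    ∀ᶠ t in nhdsWithin x ({x}ᶜ : Set unitInterval),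
      (g t - g x) / ((t : ℝ) - (x : ℝ)) ≤ γ := by
  have h' : NonDecreasingAt (fun t => (fun s => -g s) t - (-γ) * (t : ℝ)) x := by
    have he : (fun t : unitInterval => (fun s => -g s) t - (-γ) * (t : ℝ))
        = (fun t : unitInterval => -(g t - γ * (t : ℝ))) := by
      funext t; ring
    rw [he]; exact h
  refine (evClaimA (fun s => -g s) x (-γ) h').mono fun t ht => ?_
  have he : -g t - -g x = -(g t - g x) := by ring
  rw [he, neg_div] at ht
  linarith

lemma evClaimB (g : unitInterval → ℝ) (x : unitInterval) (b : ℝ)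
    (h : ∀ᶠ t in nhdsWithin x ({x}ᶜ : Set unitInterval),
      b ≤ (g t - g x) / ((t : ℝ) - (x : ℝ))) :
    NonDecreasingAt (fun t => g t - b * (t : ℝ)) x := by
  rw [Filter.eventually_iff, Metric.mem_nhdsWithin_iff] at h
  obtain ⟨ε, hε, hsub⟩ := h
  refine ⟨ε, hε, ?_, ?_⟩
  · intro t h1 h2
    have hmem : t ∈ Metric.ball x ε ∩ ({x}ᶜ : Set unitInterval) := by
      constructor
      · rw [Metric.mem_ball, unit_dist, abs_lt]; constructor <;> linarith
      · exact Set.mem_compl_singleton_iff.mpr (Subtype.coe_ne_coe.mp (ne_of_lt h2))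
    have hq : b ≤ (g t - g x) / ((t : ℝ) - (x : ℝ)) := hsub hmem
    rw [le_div_iff_of_neg (by linarith)] at hq
    have h3 : b * ((t : ℝ) - (x : ℝ)) = b * (t : ℝ) - b * (x : ℝ) := by ring
    simp only
    linarith
  · intro t h1 h2
    have hmem : t ∈ Metric.ball x ε ∩ ({x}ᶜ : Set unitInterval) := by
      constructor
      · rw [Metric.mem_ball, unit_dist, abs_lt]; constructor <;> linarith
      · exact Set.mem_compl_singleton_iff.mpr (Subtype.coe_ne_coe.mp (ne_of_gt h1))
    have hq : b ≤ (g t - g x) / ((t : ℝ) - (x : ℝ)) := hsub hmem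
    rw [le_div_iff₀ (by linarith)] at hq
    have h3 : b * ((t : ℝ) - (x : ℝ)) = b * (t : ℝ) - b * (x : ℝ) := by ring
    simp only
    linarith

lemma evClaimB' (g : unitInterval → ℝ) (x : unitInterval) (b : ℝ)
    (h : ∀ᶠ t in nhdsWithin x ({x}ᶜ : Set unitInterval),
      (g t - g x) / ((t : ℝ) - (x : ℝ)) ≤ b) :
    NonDecreasingAt (fun t => -(g t - b * (t : ℝ))) x := by
  have h' : ∀ᶠ t in nhdsWithin x ({x}ᶜ : Set unitInterval),
      (-b) ≤ ((fun s => -g s) t - (fun s => -g s) x) / ((t : ℝ) - (x : ℝ)) := by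
    refine h.mono fun t ht => ?_
    have he : -g t - -g x = -(g t - g x) := by ring
    simp only [he, neg_div]
    linarith
  have hB := evClaimB (fun s => -g s) x (-b) h'
  have he : (fun t : unitInterval => (fun s => -g s) t - (-b) * (t : ℝ))
      = (fun t : unitInterval => -(g t - b * (t : ℝ))) := by
    funext t; ring
  rwa [he] at hB

/-- A continuous `g : [0,1] → ℝ` is of nonmonotonic type if and only if at every
`x ∈ [0,1]` the upper derivative is `+∞` and the lower derivative is `−∞`. -/
theorem stmt10 (g : unitInterval → ℝ) (hg : Continuous g) :
    NonmonotonicType g ↔ ∀ x : unitInterval,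
      Filter.limsup
          (fun t : unitInterval => (((g t - g x) / ((t : ℝ) - (x : ℝ))) : EReal))
          (nhdsWithin x {x}ᶜ) = ⊤ ∧
      Filter.liminf
          (fun t : unitInterval => (((g t - g x) / ((t : ℝ) - (x : ℝ))) : EReal))
          (nhdsWithin x {x}ᶜ) = ⊥ := by
  constructor
  · intro hnm x
    constructor
    · by_contra h
      have hlt : Filter.limsup
          (fun t : unitInterval => (((g t - g x) / ((t : ℝ) - (x : ℝ))) : EReal))
          (nhdsWithin x {x}ᶜ) < ⊤ := Ne.lt_top h
      obtain ⟨b, hb1, hb2⟩ := EReal.lt_iff_exists_real_btwn.mp hlt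
      have hev := Filter.eventually_lt_of_limsup_lt hb1
      have hev' : ∀ᶠ t in nhdsWithin x ({x}ᶜ : Set unitInterval),
          (g t - g x) / ((t : ℝ) - (x : ℝ)) ≤ b := by
        exact hev.mono fun t ht => le_of_lt (EReal.coe_lt_coe_iff.mp ht)
      exact hnm x ⟨b, Or.inr (evClaimB' g x b hev')⟩
    · by_contra h
      have hlt : (⊥ : EReal) < Filter.liminf
          (fun t : unitInterval => (((g t - g x) / ((t : ℝ) - (x : ℝ))) : EReal))
          (nhdsWithin x {x}ᶜ) := Ne.bot_lt h
      obtain ⟨b, hb1, hb2⟩ := EReal.lt_iff_exists_real_btwn.mp hlt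
      have hev := Filter.eventually_lt_of_lt_liminf hb2
      have hev' : ∀ᶠ t in nhdsWithin x ({x}ᶜ : Set unitInterval),
          b ≤ (g t - g x) / ((t : ℝ) - (x : ℝ)) := by
        exact hev.mono fun t ht => le_of_lt (EReal.coe_lt_coe_iff.mp ht)
      exact hnm x ⟨b, Or.inl (evClaimB g x b hev')⟩
  · rintro h x ⟨γ, hmono⟩
    obtain ⟨htop, hbot⟩ := h x
    rcases hmono with hnd | hni
    · have hev := evClaimA g x γ hnd
      have hev' : ∀ᶠ t in nhdsWithin x ({x}ᶜ : Set unitInterval),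
          (γ : EReal) ≤ (((g t - g x) / ((t : ℝ) - (x : ℝ))) : EReal) :=
        hev.mono fun t ht => EReal.coe_le_coe_iff.mpr ht
      have hle := Filter.le_liminf_of_le (by isBoundedDefault) hev'
      rw [hbot] at hle
      exact (EReal.coe_ne_bot γ) (le_bot_iff.mp hle)
    · have hev := evClaimA' g x γ hni
      have hev' : ∀ᶠ t in nhdsWithin x ({x}ᶜ : Set unitInterval),
          (((g t - g x) / ((t : ℝ) - (x : ℝ))) : EReal) ≤ (γ : EReal) :=
        hev.mono fun t ht => EReal.coe_le_coe_iff.mpr ht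
      have hle := Filter.limsup_le_of_le (by isBoundedDefault) hev'
      rw [htop] at hle
      exact (EReal.coe_lt_top γ).ne (top_le_iff.mp hle)
end

section
/- Let f ∈ C_λ be a map other than the identity map id and the map 1 − id. Then the set B₀ := {c ∈ I : the level set Lev_f(c) = {x ∈ I : f(x) = c} has more than one point} contains an interval; in particular there is a set of positive Lebesgue measure on which f fails to be one-to-one. -/
open MeasureTheory Set
open scoped ENNReal

instance : Fact ((0:ℝ) ≤ 1) := ⟨zero_le_one⟩

lemma vol_Icc' (a b : unitInterval) (_h : a ≤ b) :
    volume (Icc a b) = ENNReal.ofReal ((b : ℝ) - a) := by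
  rw [unitInterval.volume_def,
    MeasurableEmbedding.comap_apply (MeasurableEmbedding.subtype_coe measurableSet_Icc)]
  have h' : (Subtype.val '' Icc a b : Set ℝ) = Icc (a:ℝ) (b:ℝ) := by
    ext y; constructor
    · rintro ⟨⟨z, hz⟩, ⟨h1, h2⟩, rfl⟩; exact ⟨h1, h2⟩
    · rintro ⟨h1, h2⟩
      exact ⟨⟨y, a.2.1.trans h1, h2.trans b.2.2⟩, ⟨h1, h2⟩, rfl⟩
  rw [h', Real.volume_Icc]

lemma vol_Iic' (x : unitInterval) : volume (Iic x) = ENNReal.ofReal x := by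
  have h : (Iic x : Set unitInterval) = Icc 0 x := by
    ext y
    simp only [mem_Iic, mem_Icc, iff_and_self]
    exact fun _ => y.2.1
  rw [h, vol_Icc' 0 x x.2.1]; norm_num

lemma vol_Ici' (x : unitInterval) : volume (Ici x) = ENNReal.ofReal (1 - (x : ℝ)) := by
  have h : (Ici x : Set unitInterval) = Icc x 1 := by
    ext y
    simp only [mem_Ici, mem_Icc, iff_self_and]
    exact fun _ => y.2.2
  rw [h, vol_Icc' x 1 x.2.2]; norm_num

/-- A continuous measure-preserving map of the unit interval is not injective unless it is
`id` or `symm`. -/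
lemma not_injective_of_ne (f : C(unitInterval, unitInterval))
    (hf : MeasurePreserving f volume volume)
    (hid : ⇑f ≠ id) (hsymm : ⇑f ≠ unitInterval.symm) : ¬ Function.Injective f := by
  intro hinj
  rcases f.continuous.strictMono_of_inj_boundedOrder' hinj with hm | ha
  · apply hid
    funext x
    have h1 : (f ⁻¹' Iic (f x)) = Iic x := by
      ext y; simp [hm.le_iff_le]
    have h2 := hf.measure_preimage (s := Iic (f x)) measurableSet_Iic.nullMeasurableSet
    rw [h1, vol_Iic', vol_Iic'] at h2
    have := (ENNReal.ofReal_eq_ofReal_iff x.2.1 (f x).2.1).mp h2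
    exact Subtype.ext this.symm
  · apply hsymm
    funext x
    have h1 : (f ⁻¹' Iic (f x)) = Ici x := by
      ext y; simp [ha.le_iff_ge]
    have h2 := hf.measure_preimage (s := Iic (f x)) measurableSet_Iic.nullMeasurableSet
    rw [h1, vol_Ici', vol_Iic'] at h2
    have hle : (0:ℝ) ≤ 1 - x := by linarith [x.2.2]
    have := (ENNReal.ofReal_eq_ofReal_iff hle (f x).2.1).mp h2
    exact Subtype.ext this.symm

/-- `f` is not constant on any nondegenerate interval. -/
lemma not_const_on (f : C(unitInterval, unitInterval))
    (hf : MeasurePreserving f volume volume) {u v : unitInterval} (huv : u < v)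
    (hfc : ∀ w ∈ Icc u v, f w = f u) : False := by
  have h1 : Icc u v ⊆ f ⁻¹' {f u} := fun w hw => hfc w hw
  have h2 : volume (f ⁻¹' {f u}) = volume ({f u} : Set unitInterval) :=
    hf.measure_preimage (measurableSet_singleton _).nullMeasurableSet
  have h3 : volume ({f u} : Set unitInterval) = 0 := by
    have : ({f u} : Set unitInterval) = Icc (f u) (f u) := by simp
    rw [this, vol_Icc' _ _ le_rfl]; simp
  have h4 : volume (Icc u v) = ENNReal.ofReal ((v : ℝ) - u) := vol_Icc' u v huv.le
  have h5 : (0:ℝ) < (v : ℝ) - u := by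
    have : (u : ℝ) < v := huv
    linarith
  have h6 : (0:ENNReal) < volume (Icc u v) := by
    rw [h4]; exact ENNReal.ofReal_pos.mpr h5
  have h7 : volume (Icc u v) ≤ volume (f ⁻¹' {f u}) := measure_mono h1
  rw [h2, h3] at h7
  exact absurd (le_antisymm h7 zero_le) (by simpa using h6.ne')

/-- Let `f ∈ C_λ` be different from `id` and from `1 − id`. Then the set
`B₀ = {c ∈ I : #Lev_f(c) > 1}` contains a (nondegenerate) interval; in particular there
is a set of positive Lebesgue measure on which `f` fails to be one-to-one. -/
theorem stmt15 (f : C(unitInterval, unitInterval))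
    (hf : MeasurePreserving f volume volume)
    (hid : ⇑f ≠ id) (hsymm : ⇑f ≠ unitInterval.symm) :
    (∃ a b : unitInterval, a < b ∧
      Set.Icc a b ⊆ {c : unitInterval | ∃ x y : unitInterval, x ≠ y ∧ f x = c ∧ f y = c}) ∧
    ∃ S : Set unitInterval, 0 < volume S ∧ ¬ Set.InjOn f S := by
  -- f is not injective
  obtain ⟨u₀, v₀, hne, hfe⟩ : ∃ u v : unitInterval, u ≠ v ∧ f u = f v := by
    have := not_injective_of_ne f hf hid hsymm
    simp only [Function.Injective, not_forall] at this
    obtain ⟨u, v, h1, h2⟩ := this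
    exact ⟨u, v, h2, h1⟩
  -- WLOG u < v
  obtain ⟨u, v, huv, hfuv⟩ : ∃ u v : unitInterval, u < v ∧ f u = f v := by
    rcases hne.lt_or_gt with h | h
    · exact ⟨u₀, v₀, h, hfe⟩
    · exact ⟨v₀, u₀, h, hfe.symm⟩
  -- f is not constant on [u, v]
  obtain ⟨w, hw, hwne⟩ : ∃ w ∈ Icc u v, f w ≠ f u := by
    by_contra h
    push_neg at h
    exact not_const_on f hf huv h
  have hwu : u < w := lt_of_le_of_ne hw.1 (by rintro rfl; exact hwne rfl)
  have hwv : w < v := lt_of_le_of_ne hw.2 (by rintro rfl; exact hwne (hfuv.symm))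
  -- main claim: an interval [a,b] of doubly-attained values
  suffices hmain : ∃ a b : unitInterval, a < b ∧
      Set.Icc a b ⊆ {c : unitInterval | ∃ x y : unitInterval, x ≠ y ∧ f x = c ∧ f y = c} by
    obtain ⟨a, b, hab, hsub⟩ := hmain
    refine ⟨⟨a, b, hab, hsub⟩, f ⁻¹' Icc a b, ?_, ?_⟩
    · rw [hf.measure_preimage measurableSet_Icc.nullMeasurableSet, vol_Icc' a b hab.le]
      refine ENNReal.ofReal_pos.mpr ?_
      have : (a : ℝ) < b := hab
      linarith
    · intro hInj
      obtain ⟨x, y, hxy, hfx, hfy⟩ := hsub (left_mem_Icc.mpr hab.le)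
      have hxS : x ∈ f ⁻¹' Icc a b := by simp [hfx, hab.le]
      have hyS : y ∈ f ⁻¹' Icc a b := by simp [hfy, hab.le]
      exact hxy (hInj hxS hyS (hfx.trans hfy.symm))
  rcases hwne.lt_or_gt with hlt | hlt
  · -- f w < f u : values in (f w, f u) attained twice
    obtain ⟨a, hwa, hau⟩ := exists_between hlt
    obtain ⟨b, hab, hbu⟩ := exists_between hau
    refine ⟨a, b, hab, fun c hc => ?_⟩
    have hc1 : c ∈ Icc (f w) (f u) := ⟨hwa.le.trans hc.1, hc.2.trans hbu.le⟩
    obtain ⟨x, hx, hfx⟩ := intermediate_value_Icc' hwu.le f.continuous.continuousOn hc1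
    have hc2 : c ∈ Icc (f w) (f v) := by rw [← hfuv]; exact hc1
    obtain ⟨y, hy, hfy⟩ := intermediate_value_Icc hwv.le f.continuous.continuousOn hc2
    have fwc : f w ≠ c := (hwa.trans_le hc.1).ne
    have hxw : x < w := hx.2.lt_of_ne (fun h => fwc (h ▸ hfx))
    have hyw : w < y := hy.1.lt_of_ne (fun h => fwc (h.symm ▸ hfy))
    exact ⟨x, y, (hxw.trans hyw).ne, hfx, hfy⟩
  · -- f u < f w : values in (f u, f w) attained twice
    obtain ⟨a, hua, haw⟩ := exists_between hlt
    obtain ⟨b, hab, hbw⟩ := exists_between haw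
    refine ⟨a, b, hab, fun c hc => ?_⟩
    have hc1 : c ∈ Icc (f u) (f w) := ⟨hua.le.trans hc.1, hc.2.trans hbw.le⟩
    obtain ⟨x, hx, hfx⟩ := intermediate_value_Icc hwu.le f.continuous.continuousOn hc1
    have hc2 : c ∈ Icc (f v) (f w) := by rw [← hfuv]; exact hc1
    obtain ⟨y, hy, hfy⟩ := intermediate_value_Icc' hwv.le f.continuous.continuousOn hc2
    have fwc : f w ≠ c := (hc.2.trans_lt hbw).ne'
    have hxw : x < w := hx.2.lt_of_ne (fun h => fwc (h ▸ hfx))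
    have hyw : w < y := hy.1.lt_of_ne (fun h => fwc (h.symm ▸ hfy))
    exact ⟨x, y, (hxw.trans hyw).ne, hfx, hfy⟩
end
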